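/- Define k̃ = max over ordered pairs of distinct players (i, j) of [ c·(min{x̂_i, x̂_j} + min{ŷ_i, ŷ_j}) + t_i·max{f(x̂_j) − f(x̂_i), 0} + (1−t_i)·max{f(ŷ_j) − f(ŷ_i), 0} ], the largest gain any player can obtain from a single link when everyone plays her isolation bundle. If k > k̃, then the game has a unique Nash equilibrium: the empty network with every player contributing her isolation demands, (x*_i, y*_i) = (x̂_i, ŷ_i) for all i and g*_{ij} = 0 for all i ≠ j. -/

import Mathlib

open Filter

noncomputable section

/-- `(x, y)` is an isolation demand for taste `t`: a maximizer of
`t·f(x) + (1−t)·f(y) − c·(x+y)` over nonnegative contributions. -/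
def IsIsolationDemand (f : ℝ → ℝ) (c t x y : ℝ) : Prop :=
  0 ≤ x ∧ 0 ≤ y ∧
  ∀ x' y' : ℝ, 0 ≤ x' → 0 ≤ y' →
    t * f x' + (1 - t) * f y' - c * (x' + y') ≤ t * f x + (1 - t) * f y - c * (x + y)

/-- Maintained assumptions on the benefit function `f`: twice continuously
differentiable, strictly increasing, strictly concave on `[0,∞)`, with
`lim_{z→0⁺} f′(z) > c` (possibly `+∞`, hence an `EReal` limit) and
`lim_{z→∞} f′(z) = m < c`. -/
def BenefitAssumptions (f : ℝ → ℝ) (c : ℝ) : Prop :=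
  ContDiffOn ℝ 2 f (Set.Ici 0) ∧ StrictMonoOn f (Set.Ici 0) ∧
  StrictConcaveOn ℝ (Set.Ici 0) f ∧
  (∃ L : EReal, Tendsto (fun z => Real.toEReal (deriv f z)) (nhdsWithin 0 (Set.Ioi 0)) (nhds L) ∧
    (c : EReal) < L) ∧
  (∃ m : ℝ, Tendsto (deriv f) atTop (nhds m) ∧ m < c)

/-- Spillovers of a good with contribution profile `x` received by `i`
through the links she sponsors in `g`. -/
def spill {n : ℕ} (x : Fin n → ℝ) (g : Fin n → Fin n → Bool) (i : Fin n) : ℝ :=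
  ∑ j, if g i j then x j else 0

/-- Number of links sponsored by `i` (as a real number). -/
def nlinks {n : ℕ} (g : Fin n → Fin n → Bool) (i : Fin n) : ℝ :=
  ∑ j, if g i j then (1 : ℝ) else 0

/-- Utility of player `i` under the strategy profile `(x, y, g)`. -/
def payoff {n : ℕ} (t : Fin n → ℝ) (f : ℝ → ℝ) (c k : ℝ)
    (x y : Fin n → ℝ) (g : Fin n → Fin n → Bool) (i : Fin n) : ℝ :=
  t i * f (x i + spill x g i) + (1 - t i) * f (y i + spill y g i)
    - c * (x i + y i) - nlinks g i * k

/-- Replace player `i`'s row of links by `gi`. -/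
def updLinks {n : ℕ} (g : Fin n → Fin n → Bool) (i : Fin n) (gi : Fin n → Bool) :
    Fin n → Fin n → Bool :=
  fun a b => if a = i then gi b else g a b

/-- Nash equilibrium: contributions are nonnegative, nobody links to herself,
and no player can strictly gain by simultaneously changing her own
contributions and links. -/
def NashEq {n : ℕ} (t : Fin n → ℝ) (f : ℝ → ℝ) (c k : ℝ)
    (x y : Fin n → ℝ) (g : Fin n → Fin n → Bool) : Prop :=
  (∀ i, 0 ≤ x i) ∧ (∀ i, 0 ≤ y i) ∧ (∀ i, g i i = false) ∧
  ∀ (i : Fin n) (xi yi : ℝ) (gi : Fin n → Bool), 0 ≤ xi → 0 ≤ yi → gi i = false →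
    payoff t f c k (Function.update x i xi) (Function.update y i yi) (updLinks g i gi) i
      ≤ payoff t f c k x y g i

/-- Assumptions on taste parameters: pairwise distinct, in `[0,1]`, and the
extreme types `0` and `1` are realized. -/
def TypeAssumptions {n : ℕ} (t : Fin n → ℝ) : Prop :=
  Function.Injective t ∧ (∀ i, t i ∈ Set.Icc (0:ℝ) 1) ∧ (∃ i, t i = 0) ∧ (∃ i, t i = 1)

/-- `i` is a large contributor in `g`: she receives at least one link. -/
def isContributor {n : ℕ} (g : Fin n → Fin n → Bool) (i : Fin n) : Prop :=
  ∃ j, g j i = true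

/-- `i` is isolated in `g`: she neither sponsors nor receives links. -/
def isIsolated {n : ℕ} (g : Fin n → Fin n → Bool) (i : Fin n) : Prop :=
  (∀ j, g i j = false) ∧ (∀ j, g j i = false)

/-- The gains player `i` (with taste `ti` and isolation demand `(xi, yi)`)
obtains from a single link to player `j` providing her isolation bundle
`(xj, yj)`, gross of the linking cost. -/
def linkGain (f : ℝ → ℝ) (c ti xi yi xj yj : ℝ) : ℝ :=
  c * (min xi xj + min yi yj) + ti * max (f xj - f xi) 0
    + (1 - ti) * max (f yj - f yi) 0


/-- Concave shift inequality: increments are smaller at larger bases. -/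
lemma concave_shift {f : ℝ → ℝ} (hf : ConcaveOn ℝ (Set.Ici 0) f) {b a d : ℝ}
    (hb : 0 ≤ b) (hba : b ≤ a) (hd : 0 ≤ d) :
    f (a + d) - f a ≤ f (b + d) - f b := by
  rcases eq_or_lt_of_le hd with hd0 | hd0
  · simp [← hd0]
  rcases eq_or_lt_of_le hba with hab | hab
  · simp [hab]
  have hD : 0 < a + d - b := by linarith
  set lam := d / (a + d - b) with hlam
  have hlam0 : 0 ≤ lam := div_nonneg (le_of_lt hd0) (le_of_lt hD)
  have hlam1 : lam ≤ 1 := by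
    rw [hlam, div_le_one hD]; linarith
  have hbmem : b ∈ Set.Ici (0:ℝ) := Set.mem_Ici.mpr hb
  have hadmem : (a + d) ∈ Set.Ici (0:ℝ) := Set.mem_Ici.mpr (by linarith)
  have key : lam * (a + d - b) = d := by
    rw [hlam]; field_simp
  have h1 : lam • b + (1 - lam) • (a + d) = a := by
    simp only [smul_eq_mul]; nlinarith [key]
  have h2 : (1 - lam) • b + lam • (a + d) = b + d := by
    simp only [smul_eq_mul]; nlinarith [key]
  have i1 := hf.2 hbmem hadmem hlam0 (show (0:ℝ) ≤ 1 - lam by linarith)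
    (show lam + (1 - lam) = 1 by ring)
  have i2 := hf.2 hbmem hadmem (show (0:ℝ) ≤ 1 - lam by linarith) hlam0
    (show (1 - lam) + lam = 1 by ring)
  rw [h1] at i1
  rw [h2] at i2
  simp only [smul_eq_mul] at i1 i2
  nlinarith [i1, i2]

/-- Strict decrease of `z ↦ t f z - c z` beyond its maximizer. -/
lemma phi_strict (f : ℝ → ℝ) (c t : ℝ) (hc : 0 < c) (ht : 0 ≤ t)
    (hsc : StrictConcaveOn ℝ (Set.Ici 0) f) {xh : ℝ} (hxh : 0 ≤ xh)
    (hmax : ∀ z, 0 ≤ z → t * f z - c * z ≤ t * f xh - c * xh)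
    {u v : ℝ} (hu : xh ≤ u) (huv : u < v) :
    t * f v - c * v < t * f u - c * u := by
  rcases eq_or_lt_of_le ht with ht0 | ht0
  · rw [← ht0]
    simp only [zero_mul, zero_sub]
    have := mul_lt_mul_of_pos_left huv hc
    linarith
  · rcases eq_or_lt_of_le hu with hux | hux
    · -- u = xh
      by_contra hcon
      push_neg at hcon
      have hv0 : (0:ℝ) ≤ v := by linarith
      have hne : u ≠ v := ne_of_lt huv
      have h := hsc.2 (Set.mem_Ici.mpr (by linarith : (0:ℝ) ≤ u)) (Set.mem_Ici.mpr hv0)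
        hne (show (0:ℝ) < 1/2 by norm_num) (show (0:ℝ) < 1/2 by norm_num)
        (show (1:ℝ)/2 + 1/2 = 1 by norm_num)
      simp only [smul_eq_mul] at h
      have h2 := hmax ((1/2)*u + (1/2)*v) (by nlinarith)
      have h4 := hmax v hv0
      rw [hux] at h2 h4
      have h3 := mul_lt_mul_of_pos_left h ht0
      nlinarith [h3, h2, h4, hcon]
    · -- xh < u < v
      have hvx : xh < v := lt_trans hux huv
      have hD : 0 < v - xh := by linarith
      set lam := (v - u)/(v - xh) with hlam
      have hlam0 : 0 < lam := div_pos (by linarith) hD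
      have hlam1 : lam < 1 := by
        rw [hlam, div_lt_one hD]; linarith
      have key : lam * (v - xh) = v - u := by
        rw [hlam]; field_simp
      have hcomb : lam * xh + (1 - lam) * v = u := by nlinarith [key]
      have h := hsc.2 (Set.mem_Ici.mpr hxh) (Set.mem_Ici.mpr (by linarith : (0:ℝ) ≤ v))
        (ne_of_lt hvx) hlam0 (show (0:ℝ) < 1 - lam by linarith)
        (show lam + (1 - lam) = 1 by ring)
      simp only [smul_eq_mul] at h
      rw [hcomb] at h
      have h4 := hmax v (by linarith)
      have h3 := mul_lt_mul_of_pos_left h ht0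
      have h5 : 0 ≤ lam * ((t*f xh - c*xh) - (t*f v - c*v)) :=
        mul_nonneg (le_of_lt hlam0) (by linarith)
      have hcu : c * u = c*(lam*xh) + c*((1-lam)*v) := by rw [← hcomb]; ring
      nlinarith [h3, h5, hcu]

/-- Uniqueness of the maximizer of `z ↦ t f z - c z`. -/
lemma phi_unique (f : ℝ → ℝ) (c t : ℝ) (hc : 0 < c) (ht : 0 ≤ t)
    (hsc : StrictConcaveOn ℝ (Set.Ici 0) f) {xh u : ℝ} (hxh : 0 ≤ xh) (hu : 0 ≤ u)
    (hmax : ∀ z, 0 ≤ z → t * f z - c * z ≤ t * f xh - c * xh)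
    (heq : t * f u - c * u = t * f xh - c * xh) : u = xh := by
  rcases eq_or_lt_of_le ht with ht0 | ht0
  · rw [← ht0] at heq
    simp only [zero_mul, zero_sub, neg_inj] at heq
    exact mul_left_cancel₀ (ne_of_gt hc) heq
  · by_contra hne
    have h := hsc.2 (Set.mem_Ici.mpr hu) (Set.mem_Ici.mpr hxh) hne
      (show (0:ℝ) < 1/2 by norm_num) (show (0:ℝ) < 1/2 by norm_num)
      (show (1:ℝ)/2 + 1/2 = 1 by norm_num)
    simp only [smul_eq_mul] at h
    have h2 := hmax ((1/2)*u + (1/2)*xh) (by nlinarith)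
    have h3 := mul_lt_mul_of_pos_left h ht0
    nlinarith [h3, h2, heq]

/-- Key bound: the payoff gain from spillovers `∑ a j` over the isolation
payoff is at most the sum of single-link gains. -/
lemma keybound {ι : Type*} (f : ℝ → ℝ) (c t xh : ℝ)
    (hconc : ConcaveOn ℝ (Set.Ici 0) f) (hmono : MonotoneOn f (Set.Ici 0))
    (ht : 0 ≤ t) (hxh : 0 ≤ xh)
    (hmax : ∀ z, 0 ≤ z → t * f z - c * z ≤ t * f xh - c * xh)
    (S : Finset ι) (a : ι → ℝ) (ha : ∀ j, 0 ≤ a j)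
    (xi : ℝ) (hxi : 0 ≤ xi) :
    t * f (xi + ∑ j ∈ S, a j) - c * xi ≤
      t * f xh - c * xh + ∑ j ∈ S, (c * min xh (a j) + t * max (f (a j) - f xh) 0) := by
  classical
  set G : ℝ → ℝ := fun z => t * (f (max z xh) - f xh) + c * min z xh with hG
  have gaux : ∀ b, 0 ≤ b → t * (f (xh + b) - f xh) ≤ G b := by
    intro b hb
    rcases le_or_gt b xh with hbx | hbx
    · have h := hmax (xh + b) (by linarith)
      simp only [hG, max_eq_right hbx, min_eq_left hbx]
      linarith
    · have h1 : f (b + xh) - f b ≤ f (xh + xh) - f xh :=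
        concave_shift hconc hxh (le_of_lt hbx) hxh
      have h2 := hmax (xh + xh) (by linarith)
      have h3 : f (xh + b) - f b ≤ f (xh + xh) - f xh := by
        rw [add_comm xh b]; exact h1
      have h4 : t * (f (xh + b) - f b) ≤ t * (f (xh + xh) - f xh) :=
        mul_le_mul_of_nonneg_left h3 ht
      simp only [hG, max_eq_left (le_of_lt hbx), min_eq_right (le_of_lt hbx)]
      nlinarith [h4, h2]
  have bigcase : ∀ p q, xh ≤ p → 0 ≤ q → G (p + q) ≤ G p + G q := by
    intro p q hp hq
    have hpq : xh ≤ p + q := by linarith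
    have h1 : f (p + q) - f p ≤ f (xh + q) - f xh :=
      concave_shift hconc hxh hp hq
    have h2 : t * (f (p + q) - f p) ≤ t * (f (xh + q) - f xh) :=
      mul_le_mul_of_nonneg_left h1 ht
    have h3 := gaux q hq
    simp only [hG, max_eq_left hpq, min_eq_right hpq, max_eq_left hp, min_eq_right hp]
    simp only [hG] at h3
    nlinarith [h2, h3]
  have subadd : ∀ p q, 0 ≤ p → 0 ≤ q → G (p + q) ≤ G p + G q := by
    intro p q hp hq
    rcases le_or_gt xh p with hxp | hxp
    · exact bigcase p q hxp hq
    rcases le_or_gt xh q with hxq | hxq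
    · rw [add_comm, add_comm (G p)]
      exact bigcase q p hxq hp
    rcases le_or_gt (p + q) xh with hpq | hpq
    · simp only [hG, max_eq_right hpq, min_eq_left hpq, max_eq_right (le_of_lt hxp),
        min_eq_left (le_of_lt hxp), max_eq_right (le_of_lt hxq), min_eq_left (le_of_lt hxq)]
      nlinarith []
    · have h := hmax (p + q) (by linarith)
      simp only [hG, max_eq_left (le_of_lt hpq), min_eq_right (le_of_lt hpq),
        max_eq_right (le_of_lt hxp), min_eq_left (le_of_lt hxp),
        max_eq_right (le_of_lt hxq), min_eq_left (le_of_lt hxq)]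
      nlinarith [h]
  have L2 : ∀ p, 0 ≤ p → t * f (xi + p) - c * xi ≤ t * f xh - c * xh + G p := by
    intro p hp
    rcases le_or_gt p xh with hpx | hpx
    · have h := hmax (xi + p) (by linarith)
      simp only [hG, max_eq_right hpx, min_eq_left hpx]
      nlinarith [h]
    · have h1 : f (p + xi) - f p ≤ f (xh + xi) - f xh :=
        concave_shift hconc hxh (le_of_lt hpx) hxi
      have h1' : f (xi + p) - f p ≤ f (xi + xh) - f xh := by
        rw [add_comm xi p, add_comm xi xh]; exact h1
      have h2 := hmax (xi + xh) (by linarith)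
      have h4 : t * (f (xi + p) - f p) ≤ t * (f (xi + xh) - f xh) :=
        mul_le_mul_of_nonneg_left h1' ht
      simp only [hG, max_eq_left (le_of_lt hpx), min_eq_right (le_of_lt hpx)]
      nlinarith [h4, h2]
  have sumG : ∀ T : Finset ι, G (∑ j ∈ T, a j) ≤ ∑ j ∈ T, G (a j) := by
    intro T
    induction T using Finset.induction_on with
    | empty =>
        simp only [Finset.sum_empty, hG, max_eq_right hxh, min_eq_left hxh]
        nlinarith []
    | insert _ _ hjT ih =>
        rename_i j T'
        rw [Finset.sum_insert hjT, Finset.sum_insert hjT]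
        have h1 := subadd (a j) (∑ m ∈ T', a m) (ha j)
          (Finset.sum_nonneg fun m _ => ha m)
        linarith [h1, ih]
  have Gle : ∀ j, G (a j) ≤ c * min xh (a j) + t * max (f (a j) - f xh) 0 := by
    intro j
    rcases le_or_gt (a j) xh with h | h
    · have hmx : (0:ℝ) ≤ max (f (a j) - f xh) 0 := le_max_right _ _
      have := mul_nonneg ht hmx
      simp only [hG, max_eq_right h, min_eq_left h, min_eq_right h]
      nlinarith [this]
    · have hfle : f xh ≤ f (a j) :=
        hmono (Set.mem_Ici.mpr hxh) (Set.mem_Ici.mpr (ha j)) (le_of_lt h)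
      simp only [hG, max_eq_left (le_of_lt h), min_eq_right (le_of_lt h),
        min_eq_left (le_of_lt h), max_eq_left (by linarith : (0:ℝ) ≤ f (a j) - f xh)]
      nlinarith []
  have hsum0 : 0 ≤ ∑ j ∈ S, a j := Finset.sum_nonneg fun j _ => ha j
  have h1 := L2 _ hsum0
  have h2 : G (∑ j ∈ S, a j) ≤
      ∑ j ∈ S, (c * min xh (a j) + t * max (f (a j) - f xh) 0) :=
    le_trans (sumG S) (Finset.sum_le_sum fun j _ => Gle j)
  linarith [h1, h2]


/-- Spillovers after a deviation by `i` depend only on others' contributions. -/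
lemma spill_update {n : ℕ} (x : Fin n → ℝ) (g : Fin n → Fin n → Bool) (i : Fin n)
    (gi : Fin n → Bool) (xi : ℝ) (hgii : gi i = false) :
    spill (Function.update x i xi) (updLinks g i gi) i = ∑ j, if gi j then x j else 0 := by
  unfold spill updLinks
  refine Finset.sum_congr rfl fun j _ => ?_
  simp only [if_pos rfl, if_true, eq_self_iff_true]
  by_cases hj : j = i
  · subst hj; simp [hgii]
  · rw [Function.update_of_ne hj]

lemma nlinks_update {n : ℕ} (g : Fin n → Fin n → Bool) (i : Fin n) (gi : Fin n → Bool) :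
    nlinks (updLinks g i gi) i = ∑ j, if gi j then (1:ℝ) else 0 := by
  unfold nlinks updLinks
  simp

/-- if `k` exceeds the largest gain `k̃` from any single link at
the isolation profile, the unique Nash equilibrium is the empty network with
everyone at her isolation demand. -/
theorem statement10 {n : ℕ} (hn : 3 ≤ n)
    (t : Fin n → ℝ) (hT : TypeAssumptions t)
    (f : ℝ → ℝ) (c k : ℝ) (hc : 0 < c) (hk : 0 < k)
    (hB : BenefitAssumptions f c)
    (xhat yhat : Fin n → ℝ)
    (hdem : ∀ i, IsIsolationDemand f c (t i) (xhat i) (yhat i))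
    (ktilde : ℝ)
    (hub : ∀ i j : Fin n, i ≠ j →
      linkGain f c (t i) (xhat i) (yhat i) (xhat j) (yhat j) ≤ ktilde)
    (hatt : ∃ i j : Fin n, i ≠ j ∧
      linkGain f c (t i) (xhat i) (yhat i) (xhat j) (yhat j) = ktilde)
    (hkk : ktilde < k) :
    NashEq t f c k xhat yhat (fun _ _ => false) ∧
    ∀ (x y : Fin n → ℝ) (g : Fin n → Fin n → Bool),
      NashEq t f c k x y g →
        x = xhat ∧ y = yhat ∧ ∀ i j, g i j = false := by
  obtain ⟨-, hsm, hsc, -, -⟩ := hB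
  have hconc : ConcaveOn ℝ (Set.Ici 0) f := hsc.concaveOn
  have hmonoOn : MonotoneOn f (Set.Ici 0) := hsm.monotoneOn
  obtain ⟨-, hT01, -, -⟩ := hT
  have ht0 : ∀ i, 0 ≤ t i := fun i => (hT01 i).1
  have ht1 : ∀ i, t i ≤ 1 := fun i => (hT01 i).2
  have hdx0 : ∀ i, 0 ≤ xhat i := fun i => (hdem i).1
  have hdy0 : ∀ i, 0 ≤ yhat i := fun i => (hdem i).2.1
  have hmaxx : ∀ i z, 0 ≤ z → t i * f z - c * z ≤ t i * f (xhat i) - c * xhat i := by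
    intro i z hz
    have := (hdem i).2.2 z (yhat i) hz (hdy0 i)
    linarith
  have hmaxy : ∀ i z, 0 ≤ z →
      (1 - t i) * f z - c * z ≤ (1 - t i) * f (yhat i) - c * yhat i := by
    intro i z hz
    have := (hdem i).2.2 (xhat i) z (hdx0 i) hz
    linarith
  constructor
  · -- Part 1 : the empty network with isolation demands is a Nash equilibrium
    refine ⟨hdx0, hdy0, fun i => rfl, ?_⟩
    intro i xi yi gi hxi hyi hgii
    set S : Finset (Fin n) := Finset.univ.filter (fun j => gi j = true) with hS
    have hSi : ∀ j ∈ S, j ≠ i := by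
      intro j hj hji
      subst hji
      rw [hS, Finset.mem_filter] at hj
      rw [hgii] at hj
      exact absurd hj.2 (by simp)
    have hsx : spill (Function.update xhat i xi) (updLinks (fun _ _ => false) i gi) i
        = ∑ j ∈ S, xhat j := by
      rw [spill_update _ _ _ _ _ hgii, hS, Finset.sum_filter]
    have hsy : spill (Function.update yhat i yi) (updLinks (fun _ _ => false) i gi) i
        = ∑ j ∈ S, yhat j := by
      rw [spill_update _ _ _ _ _ hgii, hS, Finset.sum_filter]
    have hnl : nlinks (updLinks (fun _ _ => false) i gi) i = (S.card : ℝ) := by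
      rw [nlinks_update, hS, Finset.sum_boole]
    have keyx := keybound f c (t i) (xhat i) hconc hmonoOn (ht0 i) (hdx0 i)
      (hmaxx i) S xhat hdx0 xi hxi
    have keyy := keybound f c (1 - t i) (yhat i) hconc hmonoOn
      (by linarith [ht1 i]) (hdy0 i) (hmaxy i) S yhat hdy0 yi hyi
    have hLsum : ∑ j ∈ S, ((c * min (xhat i) (xhat j) + t i * max (f (xhat j) - f (xhat i)) 0)
          + (c * min (yhat i) (yhat j) + (1 - t i) * max (f (yhat j) - f (yhat i)) 0))
        ≤ (S.card : ℝ) * k := by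
      have h1 : ∀ j ∈ S, (c * min (xhat i) (xhat j) + t i * max (f (xhat j) - f (xhat i)) 0)
          + (c * min (yhat i) (yhat j) + (1 - t i) * max (f (yhat j) - f (yhat i)) 0) ≤ k := by
        intro j hj
        have h2 := hub i j (Ne.symm (hSi j hj))
        simp only [linkGain] at h2
        linarith
      calc ∑ j ∈ S, ((c * min (xhat i) (xhat j) + t i * max (f (xhat j) - f (xhat i)) 0)
              + (c * min (yhat i) (yhat j) + (1 - t i) * max (f (yhat j) - f (yhat i)) 0))
          ≤ ∑ _j ∈ S, k := Finset.sum_le_sum h1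
        _ = (S.card : ℝ) * k := by rw [Finset.sum_const, nsmul_eq_mul]
    have hsplit : ∑ j ∈ S, ((c * min (xhat i) (xhat j) + t i * max (f (xhat j) - f (xhat i)) 0)
          + (c * min (yhat i) (yhat j) + (1 - t i) * max (f (yhat j) - f (yhat i)) 0))
        = (∑ j ∈ S, (c * min (xhat i) (xhat j) + t i * max (f (xhat j) - f (xhat i)) 0))
          + ∑ j ∈ S, (c * min (yhat i) (yhat j) + (1 - t i) * max (f (yhat j) - f (yhat i)) 0) :=
      Finset.sum_add_distrib
    have hisx : spill xhat (fun _ _ => false) i = 0 := by simp [spill]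
    have hisy : spill yhat (fun _ _ => false) i = 0 := by simp [spill]
    have hisn : nlinks (fun _ _ => false) i = 0 := by simp [nlinks]
    simp only [payoff, hsx, hsy, hnl, hisx, hisy, hisn, Function.update_self,
      add_zero, zero_mul, sub_zero]
    linarith [keyx, keyy, hLsum, hsplit]
  · -- Part 2 : uniqueness
    intro x y g hne
    obtain ⟨hx0, hy0, hgd, hbr⟩ := hne
    have hsp0 : ∀ (z : Fin n → ℝ), (∀ m, 0 ≤ z m) → ∀ i, 0 ≤ spill z g i := by
      intro z hz i
      refine Finset.sum_nonneg fun j _ => ?_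
      split_ifs
      · exact hz j
      · exact le_rfl
    -- Step 1: contributions never exceed isolation demands
    have hlex : ∀ j, x j ≤ xhat j := by
      intro j
      by_contra hgt
      push_neg at hgt
      have hXb0 : 0 ≤ spill x g j := hsp0 x hx0 j
      set Xb := spill x g j with hXbdef
      set xi' := max (xhat j - Xb) 0 with hxi'
      have hdev := hbr j xi' (y j) (g j) (le_max_right _ _) (hy0 j) (hgd j)
      simp only [payoff] at hdev
      rw [spill_update x g j (g j) xi' (hgd j),
        spill_update y g j (g j) (y j) (hgd j),
        nlinks_update g j (g j), Function.update_self, Function.update_self] at hdev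
      have e1 : (∑ m, if g j m then x m else 0) = Xb := rfl
      have e2 : (∑ m, if g j m then y m else 0) = spill y g j := rfl
      have e3 : (∑ m, if g j m then (1:ℝ) else 0) = nlinks g j := rfl
      rw [e1, e2, e3] at hdev
      have hu : xi' + Xb = max (xhat j) Xb := by
        rw [hxi', ← max_add_add_right]
        simp
      have hkey : t j * f (x j + Xb) - c * (x j + Xb)
          < t j * f (xi' + Xb) - c * (xi' + Xb) := by
        refine phi_strict f c (t j) hc (ht0 j) hsc (hdx0 j) (hmaxx j) ?_ ?_
        · rw [hu]; exact le_max_left _ _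
        · rw [hu]
          refine max_lt (by linarith) (by linarith [hdx0 j])
      linarith [hdev, hkey]
    have hley : ∀ j, y j ≤ yhat j := by
      intro j
      by_contra hgt
      push_neg at hgt
      have hYb0 : 0 ≤ spill y g j := hsp0 y hy0 j
      set Yb := spill y g j with hYbdef
      set yi' := max (yhat j - Yb) 0 with hyi'
      have hdev := hbr j (x j) yi' (g j) (hx0 j) (le_max_right _ _) (hgd j)
      simp only [payoff] at hdev
      rw [spill_update x g j (g j) (x j) (hgd j),
        spill_update y g j (g j) yi' (hgd j),
        nlinks_update g j (g j), Function.update_self, Function.update_self] at hdev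
      have e1 : (∑ m, if g j m then x m else 0) = spill x g j := rfl
      have e2 : (∑ m, if g j m then y m else 0) = Yb := rfl
      have e3 : (∑ m, if g j m then (1:ℝ) else 0) = nlinks g j := rfl
      rw [e1, e2, e3] at hdev
      have hu : yi' + Yb = max (yhat j) Yb := by
        rw [hyi', ← max_add_add_right]
        simp
      have hkey : (1 - t j) * f (y j + Yb) - c * (y j + Yb)
          < (1 - t j) * f (yi' + Yb) - c * (yi' + Yb) := by
        refine phi_strict f c (1 - t j) hc (by linarith [ht1 j]) hsc (hdy0 j) (hmaxy j) ?_ ?_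
        · rw [hu]; exact le_max_left _ _
        · rw [hu]
          refine max_lt (by linarith) (by linarith [hdy0 j])
      linarith [hdev, hkey]
    -- Step 2: no links in equilibrium
    have hg0 : ∀ i j, g i j = false := by
      by_contra hcon
      push_neg at hcon
      obtain ⟨i, j0, hij0⟩ := hcon
      have hij0' : g i j0 = true := by
        revert hij0
        cases g i j0 <;> simp
      set S : Finset (Fin n) := Finset.univ.filter (fun j => g i j = true) with hS
      have hj0S : j0 ∈ S := by
        rw [hS, Finset.mem_filter]
        exact ⟨Finset.mem_univ _, hij0'⟩
      have hSi : ∀ j ∈ S, j ≠ i := by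
        intro j hj hji
        subst hji
        rw [hS, Finset.mem_filter] at hj
        rw [hgd j] at hj
        exact absurd hj.2 (by simp)
      have hdev := hbr i (xhat i) (yhat i) (fun _ => false) (hdx0 i) (hdy0 i) rfl
      simp only [payoff] at hdev
      rw [spill_update x g i (fun _ => false) (xhat i) rfl,
        spill_update y g i (fun _ => false) (yhat i) rfl,
        nlinks_update g i (fun _ => false), Function.update_self, Function.update_self] at hdev
      simp only [if_neg (by simp : ¬(false = true)), Finset.sum_const_zero, add_zero,
        zero_mul, sub_zero] at hdev
      -- current payoff bounds
      have hXle : spill x g i ≤ ∑ j ∈ S, xhat j := by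
        rw [hS, Finset.sum_filter]
        refine Finset.sum_le_sum fun j _ => ?_
        split_ifs
        · exact hlex j
        · exact le_rfl
      have hYle : spill y g i ≤ ∑ j ∈ S, yhat j := by
        rw [hS, Finset.sum_filter]
        refine Finset.sum_le_sum fun j _ => ?_
        split_ifs
        · exact hley j
        · exact le_rfl
      have hXhb0 : 0 ≤ ∑ j ∈ S, xhat j := Finset.sum_nonneg fun j _ => hdx0 j
      have hYhb0 : 0 ≤ ∑ j ∈ S, yhat j := Finset.sum_nonneg fun j _ => hdy0 j
      have hfx : f (x i + spill x g i) ≤ f (x i + ∑ j ∈ S, xhat j) :=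
        hmonoOn (Set.mem_Ici.mpr (add_nonneg (hx0 i) (hsp0 x hx0 i)))
          (Set.mem_Ici.mpr (add_nonneg (hx0 i) hXhb0)) (by linarith [hXle])
      have hfy : f (y i + spill y g i) ≤ f (y i + ∑ j ∈ S, yhat j) :=
        hmonoOn (Set.mem_Ici.mpr (add_nonneg (hy0 i) (hsp0 y hy0 i)))
          (Set.mem_Ici.mpr (add_nonneg (hy0 i) hYhb0)) (by linarith [hYle])
      have hfx' : t i * f (x i + spill x g i) ≤ t i * f (x i + ∑ j ∈ S, xhat j) :=
        mul_le_mul_of_nonneg_left hfx (ht0 i)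
      have hfy' : (1 - t i) * f (y i + spill y g i)
          ≤ (1 - t i) * f (y i + ∑ j ∈ S, yhat j) :=
        mul_le_mul_of_nonneg_left hfy (by linarith [ht1 i])
      have keyx := keybound f c (t i) (xhat i) hconc hmonoOn (ht0 i) (hdx0 i)
        (hmaxx i) S xhat hdx0 (x i) (hx0 i)
      have keyy := keybound f c (1 - t i) (yhat i) hconc hmonoOn
        (by linarith [ht1 i]) (hdy0 i) (hmaxy i) S yhat hdy0 (y i) (hy0 i)
      have hnl : nlinks g i = (S.card : ℝ) := by
        unfold nlinks
        rw [hS, Finset.sum_boole]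
      have hcard1 : (1:ℝ) ≤ (S.card : ℝ) := by
        have h1 : 0 < S.card := Finset.card_pos.mpr ⟨j0, hj0S⟩
        exact_mod_cast h1
      have hLsum : ∑ j ∈ S, ((c * min (xhat i) (xhat j) + t i * max (f (xhat j) - f (xhat i)) 0)
            + (c * min (yhat i) (yhat j) + (1 - t i) * max (f (yhat j) - f (yhat i)) 0))
          ≤ (S.card : ℝ) * ktilde := by
        have h1 : ∀ j ∈ S, (c * min (xhat i) (xhat j) + t i * max (f (xhat j) - f (xhat i)) 0)
            + (c * min (yhat i) (yhat j) + (1 - t i) * max (f (yhat j) - f (yhat i)) 0)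
              ≤ ktilde := by
          intro j hj
          have h2 := hub i j (Ne.symm (hSi j hj))
          simp only [linkGain] at h2
          linarith
        calc ∑ j ∈ S, ((c * min (xhat i) (xhat j) + t i * max (f (xhat j) - f (xhat i)) 0)
                + (c * min (yhat i) (yhat j) + (1 - t i) * max (f (yhat j) - f (yhat i)) 0))
            ≤ ∑ _j ∈ S, ktilde := Finset.sum_le_sum h1
          _ = (S.card : ℝ) * ktilde := by rw [Finset.sum_const, nsmul_eq_mul]
      have hsplit : ∑ j ∈ S, ((c * min (xhat i) (xhat j) + t i * max (f (xhat j) - f (xhat i)) 0)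
            + (c * min (yhat i) (yhat j) + (1 - t i) * max (f (yhat j) - f (yhat i)) 0))
          = (∑ j ∈ S, (c * min (xhat i) (xhat j) + t i * max (f (xhat j) - f (xhat i)) 0))
            + ∑ j ∈ S, (c * min (yhat i) (yhat j) + (1 - t i) * max (f (yhat j) - f (yhat i)) 0) :=
        Finset.sum_add_distrib
      rw [hnl] at hdev
      have hcards : (S.card : ℝ) * ktilde - (S.card : ℝ) * k ≤ ktilde - k := by
        nlinarith [hcard1, hkk]
      linarith [hdev, hfx', hfy', keyx, keyy, hLsum, hsplit, hcards, hkk]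
    -- Step 3: with no links, contributions are the isolation demands
    have heq : ∀ i, x i = xhat i ∧ y i = yhat i := by
      intro i
      have hdev := hbr i (xhat i) (yhat i) (fun _ => false) (hdx0 i) (hdy0 i) rfl
      simp only [payoff] at hdev
      rw [spill_update x g i (fun _ => false) (xhat i) rfl,
        spill_update y g i (fun _ => false) (yhat i) rfl,
        nlinks_update g i (fun _ => false), Function.update_self, Function.update_self] at hdev
      have c1 : spill x g i = 0 := by
        unfold spill
        refine Finset.sum_eq_zero fun j _ => ?_
        rw [hg0 i j]
        simp
      have c2 : spill y g i = 0 := by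
        unfold spill
        refine Finset.sum_eq_zero fun j _ => ?_
        rw [hg0 i j]
        simp
      have c3 : nlinks g i = 0 := by
        unfold nlinks
        refine Finset.sum_eq_zero fun j _ => ?_
        rw [hg0 i j]
        simp
      rw [c1, c2, c3] at hdev
      simp only [if_neg (by simp : ¬(false = true)), Finset.sum_const_zero, add_zero,
        zero_mul, sub_zero] at hdev
      have hrev := (hdem i).2.2 (x i) (y i) (hx0 i) (hy0 i)
      have hpx := hmaxx i (x i) (hx0 i)
      have hpy := hmaxy i (y i) (hy0 i)
      have heqx : t i * f (x i) - c * x i = t i * f (xhat i) - c * xhat i := by linarith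
      have heqy : (1 - t i) * f (y i) - c * y i
          = (1 - t i) * f (yhat i) - c * yhat i := by linarith
      exact ⟨phi_unique f c (t i) hc (ht0 i) hsc (hdx0 i) (hx0 i) (hmaxx i) heqx,
        phi_unique f c (1 - t i) hc (by linarith [ht1 i]) hsc (hdy0 i) (hy0 i) (hmaxy i) heqy⟩
    exact ⟨funext fun i => (heq i).1, funext fun i => (heq i).2, hg0⟩
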